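/- arXiv:1203.6391 — 2 statements merged into one kernel-verified Lean document; each statement's English description precedes it below -/
import Mathlib

section
/- Let C ⊆ [0,1) be a closed set with empty interior, and let F = {(x,y) ∈ [0,1) × [0,1) : x − y (mod 1) ∈ C}. Then F contains no measurable rectangle α × β with both α and β of positive Lebesgue measure. -/
open MeasureTheory
open Pointwise

open Set in
private theorem exists_shift_pos (α β : Set ℝ) (hα : MeasurableSet α) (hβ : MeasurableSet β)
    (h1 : 0 < volume α) (h2 : 0 < volume β) :
    ∃ t : ℝ, 0 < volume (α ∩ (fun x => x - t) ⁻¹' β) := by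
  by_contra h
  push_neg at h
  simp only [nonpos_iff_eq_zero] at h
  have key : ∫⁻ t, volume (α ∩ (fun x => x - t) ⁻¹' β) = volume α * volume β := by
    have e1 : ∀ t : ℝ, volume (α ∩ (fun x => x - t) ⁻¹' β)
        = ∫⁻ x, α.indicator 1 x * β.indicator 1 (x - t) := by
      intro t
      rw [← lintegral_indicator_one ((hα.inter (hβ.preimage (by fun_prop))))]
      congr 1; ext x
      by_cases hx : x ∈ α <;> by_cases hx2 : x - t ∈ β <;>
        simp [Set.indicator_apply, hx, hx2]
    simp_rw [e1]
    rw [lintegral_lintegral_swap]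
    · have e2 : ∀ x : ℝ, ∫⁻ t, α.indicator 1 x * β.indicator 1 (x - t)
          = α.indicator 1 x * volume β := by
        intro x
        rw [lintegral_const_mul _
          (by exact (measurable_one.indicator hβ).comp (measurable_const.sub measurable_id) : Measurable fun t : ℝ => β.indicator 1 (x - t))]
        congr 1
        rw [(Measure.measurePreserving_sub_left volume x).lintegral_comp
          (measurable_one.indicator hβ)]
        exact lintegral_indicator_one hβ
      simp_rw [e2]
      rw [lintegral_mul_const _ (measurable_one.indicator hα), lintegral_indicator_one hα]
    · exact (((measurable_one.indicator hα).comp measurable_snd).mul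
        ((measurable_one.indicator hβ).comp (measurable_snd.sub measurable_fst))).aemeasurable
  simp only [h, lintegral_zero] at key
  exact (ENNReal.mul_pos h1.ne' h2.ne').ne' key.symm

/-- Let `C ⊆ [0,1)` be a closed set with empty interior and
`F = {(x,y) ∈ [0,1)² : x - y (mod 1) ∈ C}`. Then `F` contains no measurable rectangle
`α ×ˢ β` with both `α` and `β` of positive Lebesgue measure. -/
theorem stmt_6 (C : Set ℝ) (hC : C ⊆ Set.Ico 0 1) (hCclosed : IsClosed C)
    (hCint : interior C = ∅)
    (F : Set (ℝ × ℝ))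
    (hF : F = {p : ℝ × ℝ | p.1 ∈ Set.Ico (0:ℝ) 1 ∧ p.2 ∈ Set.Ico (0:ℝ) 1 ∧
      Int.fract (p.1 - p.2) ∈ C}) :
    ∀ α β : Set ℝ, α ⊆ Set.Ico 0 1 → β ⊆ Set.Ico 0 1 →
      MeasurableSet α → MeasurableSet β → 0 < volume α → 0 < volume β →
      ¬ α ×ˢ β ⊆ F := by
  intro α β hαsub hβsub hα hβ h1 h2 hsub
  -- the difference set
  set S : Set ℝ := {d | ∃ a ∈ α, ∃ b ∈ β, a - b = d} with hS
  have hSC : ∀ d ∈ S, Int.fract d ∈ C := by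
    rintro d ⟨a, ha, b, hb, rfl⟩
    have := hsub (Set.mk_mem_prod ha hb)
    rw [hF] at this
    exact this.2.2
  have hSrange : ∀ d ∈ S, -1 < d ∧ d < 1 := by
    rintro d ⟨a, ha, b, hb, rfl⟩
    have h1 := hαsub ha; have h2 := hβsub hb
    constructor <;> simp only [Set.mem_Ico] at h1 h2 <;> linarith
  -- find a translate with positive intersection
  obtain ⟨t, ht⟩ := exists_shift_pos α β hα hβ h1 h2
  set E : Set ℝ := α ∩ (fun x => x - t) ⁻¹' β with hE
  have hEmeas : MeasurableSet E := hα.inter (hβ.preimage (by fun_prop))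
  -- Steinhaus
  have hnhds : E - E ∈ nhds (0 : ℝ) :=
    MeasureTheory.Measure.sub_mem_nhds_zero_of_addHaar_pos volume E hEmeas ht
  have hStS : S ∈ nhds t := by
    have : S ∈ Filter.map (fun d => t + d) (nhds 0) := by
      rw [Filter.mem_map]
      filter_upwards [hnhds]
      rintro d ⟨e, he, e', he', rfl⟩
      exact ⟨e, he.1, e' - t, he'.2, by ring⟩
    rwa [map_add_left_nhds_zero t] at this
  -- get an open set V ⊆ S containing t
  obtain ⟨V, hVS, hVopen, htV⟩ := mem_nhds_iff.mp hStS
  -- pick a nonzero point of V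
  obtain ⟨u, huV, hu0⟩ : ∃ u ∈ V, u ≠ 0 := by
    by_cases h : t = 0
    · obtain ⟨ε, hε, hball⟩ := Metric.isOpen_iff.mp hVopen t htV
      refine ⟨t + ε / 2, hball ?_, by rw [h]; positivity⟩
      rw [Metric.mem_ball, Real.dist_eq]
      rw [show t + ε / 2 - t = ε / 2 by ring, abs_of_pos (by positivity : (0:ℝ) < ε / 2)]
      linarith
    · exact ⟨t, htV, h⟩
  obtain ⟨ε, hε, hball⟩ := Metric.isOpen_iff.mp hVopen u huV
  have hmin : 0 < min ε |u| := lt_min hε (abs_pos.mpr hu0)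
  set δ := min ε |u| / 2 with hδ
  have hδpos : 0 < δ := by positivity
  have hδε : δ < ε := lt_of_lt_of_le (half_lt_self hmin) (min_le_left _ _)
  have hδu : δ < |u| := lt_of_lt_of_le (half_lt_self hmin) (min_le_right _ _)
  have hJV : Set.Ioo (u - δ) (u + δ) ⊆ V := by
    intro d hd
    apply hball
    rw [Metric.mem_ball, Real.dist_eq, abs_lt]
    constructor <;> simp only [Set.mem_Ioo] at hd <;> linarith
  have hJS : Set.Ioo (u - δ) (u + δ) ⊆ S := fun d hd => hVS (hJV hd)
  rcases lt_or_gt_of_ne hu0 with hneg | hpos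
  · -- u < 0 : J ⊆ (-1, 0), fract d = d + 1, so J + 1 ⊆ C
    have habs : |u| = -u := abs_of_neg hneg
    have hsub' : Set.Ioo (u - δ + 1) (u + δ + 1) ⊆ C := by
      rintro e ⟨hel, heu⟩
      have hd : e - 1 ∈ S := hJS ⟨by linarith, by linarith⟩
      have hr := hSrange _ hd
      have hdneg : e - 1 < 0 := by rw [habs] at hδu; linarith
      have : Int.fract (e - 1) = e := by
        have h' := Int.fract_add_one (e - 1)
        rw [sub_add_cancel] at h'
        rw [← h', Int.fract_eq_self.mpr ⟨by linarith [hr.1], by linarith⟩]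
      rw [← this]; exact hSC _ hd
    have : Set.Ioo (u - δ + 1) (u + δ + 1) ⊆ interior C :=
      interior_maximal hsub' isOpen_Ioo
    have hne : (u + 1 : ℝ) ∈ Set.Ioo (u - δ + 1) (u + δ + 1) :=
      ⟨by linarith, by linarith⟩
    rw [hCint] at this
    exact this hne
  · -- u > 0 : J ⊆ (0,1), fract d = d, so J ⊆ C
    have habs : |u| = u := abs_of_pos hpos
    have hsub' : Set.Ioo (u - δ) (u + δ) ⊆ C := by
      rintro d hd
      have hdS := hJS hd
      have hr := hSrange _ hdS
      have hdpos : 0 < d := by rw [habs] at hδu; simp only [Set.mem_Ioo] at hd; linarith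
      have : Int.fract d = d := Int.fract_eq_self.mpr ⟨hdpos.le, hr.2⟩
      rw [← this]; exact hSC _ hdS
    have : Set.Ioo (u - δ) (u + δ) ⊆ interior C := interior_maximal hsub' isOpen_Ioo
    rw [hCint] at this
    exact this ⟨by linarith, by linarith⟩
end

section
/- Let L be a lattice of closed subspaces of a Hilbert space K containing 0 and K, let M be a lattice of closed subspaces of H with a distinguished family of atoms {E_j : j ∈ J} which are mutually 'independent' in the sense that E_k ∩ (closed span of {E_j : j ≠ k}) = 0 for each k. Suppose for each j we have P_j, Q_j ∈ L. If ⋁_{j∈J} (P_j ⊗ E_j) = ⋁_{j∈J} (Q_j ⊗ E_j) as closed subspaces of K ⊗ H, and each E_j ≠ 0, then in the two-atom case J = {1,2} with E_1 ∨ E_2 = H one has P_j = Q_j for j = 1, 2. -/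
open scoped InnerProductSpace
open Filter

variable {K H T : Type*}
  [NormedAddCommGroup K] [InnerProductSpace ℂ K] [CompleteSpace K]
  [NormedAddCommGroup H] [InnerProductSpace ℂ H] [CompleteSpace H]
  [NormedAddCommGroup T] [InnerProductSpace ℂ T] [CompleteSpace T]

/-- A realization of the Hilbert space tensor product `K ⊗ H` as a Hilbert space `T`. -/
structure HilbertTensor (K H T : Type*)
    [NormedAddCommGroup K] [InnerProductSpace ℂ K]
    [NormedAddCommGroup H] [InnerProductSpace ℂ H]
    [NormedAddCommGroup T] [InnerProductSpace ℂ T] where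
  tmul : K →ₗ[ℂ] H →ₗ[ℂ] T
  inner_tmul : ∀ (x x' : K) (y y' : H),
    ⟪tmul x y, tmul x' y'⟫_ℂ = ⟪x, x'⟫_ℂ * ⟪y, y'⟫_ℂ
  dense_span : Dense (Submodule.span ℂ {z | ∃ x y, z = tmul x y} : Set T)

/-- The subspace `P ⊗ E` of `K ⊗ H`: the closed linear span of the elementary tensors. -/
def subTensor (tp : HilbertTensor K H T) (P : Submodule ℂ K) (E : Submodule ℂ H) :
    Submodule ℂ T :=
  (Submodule.span ℂ {z | ∃ p ∈ P, ∃ e ∈ E, z = tp.tmul p e}).topologicalClosure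

/-- The continuous linear map `k ↦ k ⊗ f`. -/
noncomputable def HilbertTensor.embed (tp : HilbertTensor K H T) (f : H) : K →L[ℂ] T :=
  LinearMap.mkContinuous (tp.tmul.flip f) ‖f‖ (by
    intro k
    have h : (⟪tp.tmul k f, tp.tmul k f⟫_ℂ) = ⟪k, k⟫_ℂ * ⟪f, f⟫_ℂ := tp.inner_tmul k k f f
    rw [inner_self_eq_norm_sq_to_K, inner_self_eq_norm_sq_to_K, inner_self_eq_norm_sq_to_K] at h
    have h' : ((‖tp.tmul k f‖ ^ 2 : ℝ) : ℂ) = ((‖k‖ ^ 2 * ‖f‖ ^ 2 : ℝ) : ℂ) := by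
      push_cast; exact h
    have h2 : ‖(tp.tmul.flip f) k‖ ^ 2 = ‖k‖ ^ 2 * ‖f‖ ^ 2 := by exact_mod_cast h'
    nlinarith [norm_nonneg ((tp.tmul.flip f) k), norm_nonneg k, norm_nonneg f,
      mul_nonneg (norm_nonneg f) (norm_nonneg k)])

/-- The slice map `S_f`, adjoint of `embed f`, sends `x ⊗ y` to `⟪f, y⟫ • x`. -/
theorem HilbertTensor.adjoint_embed_tmul (tp : HilbertTensor K H T) (f : H) (x : K) (y : H) :
    ContinuousLinearMap.adjoint (tp.embed f) (tp.tmul x y) = ⟪f, y⟫_ℂ • x := by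
  apply ext_inner_left ℂ
  intro k
  rw [ContinuousLinearMap.adjoint_inner_right]
  have : tp.embed f k = tp.tmul k f := rfl
  rw [this, tp.inner_tmul, inner_smul_right]
  ring

theorem aux_le (tp : HilbertTensor K H T)
    (E₁ E₂ : Submodule ℂ H) (hE₂c : IsClosed (E₂ : Set H))
    (hE₁ : E₁ ≠ ⊥) (hind : E₁ ⊓ E₂ = ⊥)
    (P₁ P₂ Q₁ Q₂ : Submodule ℂ K) (hQ₁c : IsClosed (Q₁ : Set K))
    (hle : (subTensor tp P₁ E₁ ⊔ subTensor tp P₂ E₂).topologicalClosure ≤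
           (subTensor tp Q₁ E₁ ⊔ subTensor tp Q₂ E₂).topologicalClosure) :
    P₁ ≤ Q₁ := by
  -- pick a nonzero e ∈ E₁
  obtain ⟨e, he, hene⟩ := Submodule.exists_mem_ne_zero_of_ne_bot hE₁
  -- find f ⊥ E₂ with ⟪f, e⟫ ≠ 0
  have heE₂ : e ∉ E₂ := by
    intro hmem
    exact hene (by simpa [hind] using (Submodule.mem_inf.mpr ⟨he, hmem⟩))
  have hfex : ∃ f ∈ E₂ᗮ, ⟪f, e⟫_ℂ ≠ 0 := by
    by_contra hc
    push_neg at hc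
    have : e ∈ E₂ᗮᗮ := by
      rw [Submodule.mem_orthogonal]
      exact hc
    rw [Submodule.orthogonal_orthogonal_eq_closure, hE₂c.submodule_topologicalClosure_eq] at this
    exact heE₂ this
  obtain ⟨f, hf, hfe⟩ := hfex
  set S := ContinuousLinearMap.adjoint (tp.embed f) with hS
  set C : Submodule ℂ T := Q₁.comap (S : T →ₗ[ℂ] K) with hC
  have hCc : IsClosed (C : Set T) := hQ₁c.preimage S.continuous
  have h1 : subTensor tp Q₁ E₁ ≤ C := by
    refine Submodule.topologicalClosure_minimal _ ?_ hCc
    rw [Submodule.span_le]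
    rintro z ⟨q, hq, e', he', rfl⟩
    show S (tp.tmul q e') ∈ Q₁
    rw [hS, tp.adjoint_embed_tmul]
    exact Q₁.smul_mem _ hq
  have h2 : subTensor tp Q₂ E₂ ≤ C := by
    refine Submodule.topologicalClosure_minimal _ ?_ hCc
    rw [Submodule.span_le]
    rintro z ⟨q, hq, e', he', rfl⟩
    show S (tp.tmul q e') ∈ Q₁
    rw [hS, tp.adjoint_embed_tmul]
    have : ⟪f, e'⟫_ℂ = 0 := by
      rw [← inner_eq_zero_symm]
      exact hf e' he'
    simp [this]
  have hRC : (subTensor tp Q₁ E₁ ⊔ subTensor tp Q₂ E₂).topologicalClosure ≤ C :=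
    Submodule.topologicalClosure_minimal _ (sup_le h1 h2) hCc
  intro p hp
  have hz : tp.tmul p e ∈ subTensor tp P₁ E₁ :=
    Submodule.le_topologicalClosure _ (Submodule.subset_span ⟨p, hp, e, he, rfl⟩)
  have hz2 : tp.tmul p e ∈ (subTensor tp P₁ E₁ ⊔ subTensor tp P₂ E₂).topologicalClosure :=
    Submodule.le_topologicalClosure _ (le_sup_left (b := subTensor tp P₂ E₂) hz)
  have hz3 : S (tp.tmul p e) ∈ Q₁ := hRC (hle hz2)
  rw [hS, tp.adjoint_embed_tmul] at hz3
  exact (Q₁.smul_mem_iff hfe).mp hz3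

/-- Uniqueness of the representation for a two-atom ABSL `M = {0, E₁, E₂, H}`
(`E₁ ∩ E₂ = 0`, `E₁ ∨ E₂ = H`, both atoms nonzero): if `P₁, P₂, Q₁, Q₂` are members of a
subspace lattice `L` on `K` and `(P₁ ⊗ E₁) ∨ (P₂ ⊗ E₂) = (Q₁ ⊗ E₁) ∨ (Q₂ ⊗ E₂)`, then
`P₁ = Q₁` and `P₂ = Q₂`. -/
theorem stmt_14 (tp : HilbertTensor K H T)
    (E₁ E₂ : Submodule ℂ H) (hE₁c : IsClosed (E₁ : Set H)) (hE₂c : IsClosed (E₂ : Set H))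
    (hE₁ : E₁ ≠ ⊥) (hE₂ : E₂ ≠ ⊥)
    (hind : E₁ ⊓ E₂ = ⊥) (hjoin : (E₁ ⊔ E₂).topologicalClosure = ⊤)
    (L : Set (Submodule ℂ K)) (hLc : ∀ M ∈ L, IsClosed (M : Set K))
    (hbot : ⊥ ∈ L) (htop : ⊤ ∈ L)
    (P₁ P₂ Q₁ Q₂ : Submodule ℂ K)
    (hP₁ : P₁ ∈ L) (hP₂ : P₂ ∈ L) (hQ₁ : Q₁ ∈ L) (hQ₂ : Q₂ ∈ L)
    (heq : (subTensor tp P₁ E₁ ⊔ subTensor tp P₂ E₂).topologicalClosure =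
           (subTensor tp Q₁ E₁ ⊔ subTensor tp Q₂ E₂).topologicalClosure) :
    P₁ = Q₁ ∧ P₂ = Q₂ := by
  have hind' : E₂ ⊓ E₁ = ⊥ := by rw [inf_comm]; exact hind
  have heq' : (subTensor tp P₂ E₂ ⊔ subTensor tp P₁ E₁).topologicalClosure =
      (subTensor tp Q₂ E₂ ⊔ subTensor tp Q₁ E₁).topologicalClosure := by
    rw [sup_comm (subTensor tp P₂ E₂), sup_comm (subTensor tp Q₂ E₂)]; exact heq
  exact ⟨le_antisymm
      (aux_le tp E₁ E₂ hE₂c hE₁ hind P₁ P₂ Q₁ Q₂ (hLc Q₁ hQ₁) heq.le)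
      (aux_le tp E₁ E₂ hE₂c hE₁ hind Q₁ Q₂ P₁ P₂ (hLc P₁ hP₁) heq.ge),
    le_antisymm
      (aux_le tp E₂ E₁ hE₁c hE₂ hind' P₂ P₁ Q₂ Q₁ (hLc Q₂ hQ₂) heq'.le)
      (aux_le tp E₂ E₁ hE₁c hE₂ hind' Q₂ Q₁ P₂ P₁ (hLc P₂ hP₂) heq'.ge)⟩
end
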